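/- arXiv:1103.4097 — 6 statements merged into one kernel-verified Lean document; each statement's English description precedes it below -/
import Mathlib

section
/- For every natural number k and every σ ∈ V_k, the quadratic relation (D̄ + k)(D̄ − (k+2))σ = 0 holds; explicitly, D̄(D̄σ) − 2·D̄σ − k(k+2)·σ = 0 as a function ℍ → ℍ. -/
open Quaternion MvPolynomial

noncomputable section

/-- The standard imaginary quaternion units. -/
def e1 : ℍ[ℝ] := ⟨0, 1, 0, 0⟩
def e2 : ℍ[ℝ] := ⟨0, 0, 1, 0⟩
def e3 : ℍ[ℝ] := ⟨0, 0, 0, 1⟩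

/-- Infinitesimal right translation: `(L_v σ)(x) = Dσ(x)[x·v]`. -/
def Lop (v : ℍ[ℝ]) (σ : ℍ[ℝ] → ℍ[ℝ]) : ℍ[ℝ] → ℍ[ℝ] :=
  fun x => fderiv ℝ σ x (x * v)

/-- The operator `D̄σ = −((L₁σ)·e₁ + (L₂σ)·e₂ + (L₃σ)·e₃)`. -/
def Dbar (σ : ℍ[ℝ] → ℍ[ℝ]) : ℍ[ℝ] → ℍ[ℝ] :=
  fun x => -(Lop e1 σ x * e1 + Lop e2 σ x * e2 + Lop e3 σ x * e3)

/-- The four real coordinates of a quaternion. -/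
def coords (x : ℍ[ℝ]) : Fin 4 → ℝ := ![x.re, x.imI, x.imJ, x.imK]

/-- `σ ∈ V_k`: each of the four real components of `σ` is (given by) a harmonic
polynomial on `ℝ⁴`, homogeneous of degree `k`. -/
def memVk (k : ℕ) (σ : ℍ[ℝ] → ℍ[ℝ]) : Prop :=
  ∀ c : Fin 4, ∃ P : MvPolynomial (Fin 4) ℝ,
    P.IsHomogeneous k ∧ (∑ i : Fin 4, pderiv i (pderiv i P)) = 0 ∧
    ∀ x : ℍ[ℝ], eval (coords x) P = coords (σ x) c

/-! ### Auxiliary development -/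

/-- The quaternion basis indexed by `Fin 4`. -/
def uq : Fin 4 → ℍ[ℝ] := ![1, e1, e2, e3]

lemma uq_decomp (q : ℍ[ℝ]) : q = ∑ c : Fin 4, coords q c • uq c := by
  rw [Fin.sum_univ_four]
  ext <;> simp [uq, coords, Quaternion.re_smul] <;> simp [e1, e2, e3]

def coordsCLM : ℍ[ℝ] →L[ℝ] (Fin 4 → ℝ) :=
  LinearMap.toContinuousLinearMap
  { toFun := coords
    map_add' := by intro a b; funext i; fin_cases i <;> simp [coords]
    map_smul' := by intro m a; funext i; fin_cases i <;> simp [coords] }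

@[simp] lemma coordsCLM_apply (x : ℍ[ℝ]) : coordsCLM x = coords x := rfl

lemma coords_uq (m j : Fin 4) : coords (uq m) j = if m = j then 1 else 0 := by
  fin_cases m <;> fin_cases j <;> simp [uq, coords, e1, e2, e3]

lemma coords_mul_e1 (x : ℍ[ℝ]) : coords (x * e1) = ![-x.imI, x.re, x.imK, -x.imJ] := by
  funext i; fin_cases i <;> simp [coords, Quaternion.re_mul, Quaternion.imI_mul,
    Quaternion.imJ_mul, Quaternion.imK_mul] <;> simp [e1]
lemma coords_mul_e2 (x : ℍ[ℝ]) : coords (x * e2) = ![-x.imJ, -x.imK, x.re, x.imI] := by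
  funext i; fin_cases i <;> simp [coords, Quaternion.re_mul, Quaternion.imI_mul,
    Quaternion.imJ_mul, Quaternion.imK_mul] <;> simp [e2]
lemma coords_mul_e3 (x : ℍ[ℝ]) : coords (x * e3) = ![-x.imK, x.imJ, -x.imI, x.re] := by
  funext i; fin_cases i <;> simp [coords, Quaternion.re_mul, Quaternion.imI_mul,
    Quaternion.imJ_mul, Quaternion.imK_mul] <;> simp [e3]

lemma e1_mul_e1 : e1 * e1 = -1 := by ext <;> simp [Quaternion.re_mul, Quaternion.imI_mul, Quaternion.imJ_mul, Quaternion.imK_mul] <;> simp [e1]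
lemma e2_mul_e2 : e2 * e2 = -1 := by ext <;> simp [Quaternion.re_mul, Quaternion.imI_mul, Quaternion.imJ_mul, Quaternion.imK_mul] <;> simp [e2]
lemma e3_mul_e3 : e3 * e3 = -1 := by ext <;> simp [Quaternion.re_mul, Quaternion.imI_mul, Quaternion.imJ_mul, Quaternion.imK_mul] <;> simp [e3]
lemma e1_mul_e2 : e1 * e2 = e3 := by ext <;> simp [Quaternion.re_mul, Quaternion.imI_mul, Quaternion.imJ_mul, Quaternion.imK_mul] <;> simp [e1, e2, e3]
lemma e2_mul_e1 : e2 * e1 = -e3 := by ext <;> simp [Quaternion.re_mul, Quaternion.imI_mul, Quaternion.imJ_mul, Quaternion.imK_mul] <;> simp [e1, e2, e3]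
lemma e1_mul_e3 : e1 * e3 = -e2 := by ext <;> simp [Quaternion.re_mul, Quaternion.imI_mul, Quaternion.imJ_mul, Quaternion.imK_mul] <;> simp [e1, e2, e3]
lemma e3_mul_e1 : e3 * e1 = e2 := by ext <;> simp [Quaternion.re_mul, Quaternion.imI_mul, Quaternion.imJ_mul, Quaternion.imK_mul] <;> simp [e1, e2, e3]
lemma e2_mul_e3 : e2 * e3 = e1 := by ext <;> simp [Quaternion.re_mul, Quaternion.imI_mul, Quaternion.imJ_mul, Quaternion.imK_mul] <;> simp [e1, e2, e3]
lemma e3_mul_e2 : e3 * e2 = -e1 := by ext <;> simp [Quaternion.re_mul, Quaternion.imI_mul, Quaternion.imJ_mul, Quaternion.imK_mul] <;> simp [e1, e2, e3]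

lemma coords_orth (x : ℍ[ℝ]) (m n : Fin 4) :
    ∑ i : Fin 4, coords (x * uq i) m * coords (x * uq i) n
      = (if m = n then ∑ j : Fin 4, coords x j ^ 2 else 0) := by
  have h0 : x * uq 0 = x := by simp [uq]
  have h1 : uq 1 = e1 := rfl
  have h2 : uq 2 = e2 := rfl
  have h3 : uq 3 = e3 := rfl
  rw [Fin.sum_univ_four, h0, h1, h2, h3, coords_mul_e1, coords_mul_e2, coords_mul_e3]
  fin_cases m <;> fin_cases n <;>
    simp [coords, Fin.sum_univ_four] <;> ring

/-! ### Derivative of multivariate polynomial evaluation -/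

lemma hasFDerivAt_mveval (P : MvPolynomial (Fin 4) ℝ) (y : Fin 4 → ℝ) :
    HasFDerivAt (fun v : Fin 4 → ℝ => eval v P)
      ((∑ i : Fin 4, eval y (pderiv i P) • ContinuousLinearMap.proj i :
        (Fin 4 → ℝ) →L[ℝ] ℝ)) y := by
  induction P using MvPolynomial.induction_on with
  | C a =>
      simp only [eval_C, pderiv_C, map_zero, zero_smul, Finset.sum_const_zero]
      exact hasFDerivAt_const (𝕜 := ℝ) a y
  | add p q hp hq =>
      have h2 : ((∑ i : Fin 4, eval y (pderiv i (p + q)) • ContinuousLinearMap.proj i :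
          (Fin 4 → ℝ) →L[ℝ] ℝ))
          = (∑ i : Fin 4, eval y (pderiv i p) • ContinuousLinearMap.proj i)
            + (∑ i : Fin 4, eval y (pderiv i q) • ContinuousLinearMap.proj i) := by
        rw [← Finset.sum_add_distrib]
        exact Finset.sum_congr rfl fun i _ => by simp [add_smul]
      rw [h2]
      have := hp.fun_add hq
      simpa only [map_add] using this
  | mul_X p n hp =>
      have hX : HasFDerivAt (fun v : Fin 4 → ℝ => v n)
          (ContinuousLinearMap.proj n : (Fin 4 → ℝ) →L[ℝ] ℝ) y :=
        ((ContinuousLinearMap.proj n : (Fin 4 → ℝ) →L[ℝ] ℝ)).hasFDerivAt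
      have key := hp.fun_mul hX
      simp only [eval_mul, eval_X]
      refine key.congr_fderiv ?_
      symm
      ext v
      simp only [ContinuousLinearMap.sum_apply, ContinuousLinearMap.smul_apply,
        ContinuousLinearMap.add_apply, ContinuousLinearMap.proj_apply, pderiv_mul,
        map_add, eval_mul, eval_X, smul_eq_mul, add_mul]
      rw [Finset.sum_add_distrib, add_comm]
      congr 1
      · rw [Finset.sum_eq_single n]
        · simp
        · intro b _ hb
          rw [pderiv_X_of_ne (Ne.symm hb)]
          simp
        · intro h; exact absurd (Finset.mem_univ n) h
      · rw [Finset.mul_sum]; exact Finset.sum_congr rfl fun i _ => by ring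

/-! ### Euler's identity for homogeneous polynomials -/

lemma euler_monomial (d : Fin 4 →₀ ℕ) (a : ℝ) (i : Fin 4) :
    X i * pderiv i (monomial d a) = ((d i : ℝ)) • monomial d a := by
  rw [pderiv_monomial]
  rcases Nat.eq_zero_or_pos (d i) with h | h
  · simp [h]
  · have hle : Finsupp.single i 1 ≤ d := by
      rw [Finsupp.single_le_iff]; exact h
    rw [X, monomial_mul, one_mul, add_tsub_cancel_of_le hle, smul_monomial]
    congr 1
    simp [mul_comm]

lemma euler_identity {k : ℕ} {P : MvPolynomial (Fin 4) ℝ} (hP : P.IsHomogeneous k) :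
    ∑ i : Fin 4, X i * pderiv i P = (k : ℝ) • P := by
  have step : ∀ i : Fin 4, X i * pderiv i P
      = ∑ d ∈ P.support, ((d i : ℝ)) • monomial d (coeff d P) := by
    intro i
    conv_lhs => rw [P.as_sum]
    rw [map_sum, Finset.mul_sum]
    exact Finset.sum_congr rfl fun d _ => euler_monomial d (coeff d P) i
  calc ∑ i : Fin 4, X i * pderiv i P
      = ∑ i : Fin 4, ∑ d ∈ P.support, ((d i : ℝ)) • monomial d (coeff d P) :=
        Finset.sum_congr rfl fun i _ => step i
    _ = ∑ d ∈ P.support, ∑ i : Fin 4, ((d i : ℝ)) • monomial d (coeff d P) :=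
        Finset.sum_comm
    _ = ∑ d ∈ P.support, (k : ℝ) • monomial d (coeff d P) := by
        refine Finset.sum_congr rfl fun d hd => ?_
        rw [← Finset.sum_smul]
        congr 1
        have h1 := hP (mem_support_iff.mp hd)
        have h2 : (Finsupp.weight 1) d = ∑ i : Fin 4, d i := by
          rw [Finsupp.weight_apply, Finsupp.sum_fintype]
          · simp
          · intro _; simp
        rw [h2] at h1
        rw [← h1]
        push_cast
        rfl
    _ = (k : ℝ) • P := by rw [← Finset.smul_sum, ← P.as_sum]

/-! ### Quaternion-valued polynomial functions and their derivatives -/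

abbrev QP := Fin 4 → MvPolynomial (Fin 4) ℝ

/-- Right multiplication by `v` as a continuous linear map. -/
def mulE (v : ℍ[ℝ]) : ℍ[ℝ] →L[ℝ] ℍ[ℝ] := (ContinuousLinearMap.mul ℝ ℍ[ℝ]).flip v
@[simp] lemma mulE_apply (v h : ℍ[ℝ]) : mulE v h = h * v := rfl

def qpoly (Q : QP) : ℍ[ℝ] → ℍ[ℝ] := fun x => ∑ c : Fin 4, eval (coords x) (Q c) • uq c

def M (c i : Fin 4) : ℍ[ℝ] →L[ℝ] ℍ[ℝ] :=
  (((ContinuousLinearMap.proj i : (Fin 4 → ℝ) →L[ℝ] ℝ)).comp coordsCLM).smulRight (uq c)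

@[simp] lemma M_apply (c i : Fin 4) (h : ℍ[ℝ]) : M c i h = coords h i • uq c := rfl

lemma hasFDerivAt_evalCoords (P : MvPolynomial (Fin 4) ℝ) (x : ℍ[ℝ]) :
    HasFDerivAt (fun y : ℍ[ℝ] => eval (coords y) P)
      (((∑ i : Fin 4, eval (coords x) (pderiv i P) • ContinuousLinearMap.proj i :
        (Fin 4 → ℝ) →L[ℝ] ℝ)).comp coordsCLM) x :=
  (hasFDerivAt_mveval P (coords x)).comp x coordsCLM.hasFDerivAt

def FD (Q : QP) (x : ℍ[ℝ]) : ℍ[ℝ] →L[ℝ] ℍ[ℝ] :=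
  ∑ c : Fin 4, ∑ i : Fin 4, eval (coords x) (pderiv i (Q c)) • M c i

def SD (Q : QP) (x : ℍ[ℝ]) : ℍ[ℝ] →L[ℝ] (ℍ[ℝ] →L[ℝ] ℍ[ℝ]) :=
  ∑ c : Fin 4, ∑ i : Fin 4,
    (((∑ j : Fin 4, eval (coords x) (pderiv j (pderiv i (Q c))) • ContinuousLinearMap.proj j :
      (Fin 4 → ℝ) →L[ℝ] ℝ)).comp coordsCLM).smulRight (M c i)

lemma FD_apply (Q : QP) (x h : ℍ[ℝ]) :
    FD Q x h = ∑ c : Fin 4, (∑ i : Fin 4, coords h i * eval (coords x) (pderiv i (Q c))) • uq c := by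
  simp only [FD, ContinuousLinearMap.sum_apply, ContinuousLinearMap.smul_apply, M_apply,
    smul_smul]
  refine Finset.sum_congr rfl fun c _ => ?_
  rw [Finset.sum_smul]
  exact Finset.sum_congr rfl fun i _ => by rw [mul_comm]

lemma hasFDerivAt_qpoly (Q : QP) (x : ℍ[ℝ]) : HasFDerivAt (qpoly Q) (FD Q x) x := by
  unfold qpoly FD
  apply HasFDerivAt.fun_sum
  intro c _
  have h := (hasFDerivAt_evalCoords (Q c) x).smul_const (uq c)
  convert h using 1
  refine ContinuousLinearMap.ext fun v => ?_
  simp only [ContinuousLinearMap.sum_apply, ContinuousLinearMap.smul_apply, M_apply,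
    ContinuousLinearMap.smulRight_apply, ContinuousLinearMap.comp_apply, coordsCLM_apply,
    ContinuousLinearMap.proj_apply, smul_smul, smul_eq_mul]
  rw [Finset.sum_smul]

lemma hasFDerivAt_FD (Q : QP) (x : ℍ[ℝ]) :
    HasFDerivAt (fun y => FD Q y) (SD Q x) x := by
  unfold FD SD
  letI : IsBoundedSMul ℝ (ℍ[ℝ] →L[ℝ] ℍ[ℝ]) := @NormedSpace.toIsBoundedSMul ℝ (ℍ[ℝ] →L[ℝ] ℍ[ℝ]) _ _ _
  exact HasFDerivAt.fun_sum fun c _ => HasFDerivAt.fun_sum fun i _ =>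
    (hasFDerivAt_evalCoords (pderiv i (Q c)) x).smul_const (M c i)

lemma SD_apply (Q : QP) (x a b : ℍ[ℝ]) :
    SD Q x a b = ∑ c : Fin 4, (∑ i : Fin 4,
      (∑ j : Fin 4, coords a j * eval (coords x) (pderiv j (pderiv i (Q c)))) * coords b i) • uq c := by
  simp only [SD, ContinuousLinearMap.sum_apply, ContinuousLinearMap.smulRight_apply,
    ContinuousLinearMap.comp_apply, coordsCLM_apply, ContinuousLinearMap.smul_apply,
    ContinuousLinearMap.proj_apply, M_apply, smul_smul]
  refine Finset.sum_congr rfl fun c _ => ?_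
  rw [Finset.sum_smul]
  refine Finset.sum_congr rfl fun i _ => ?_
  simp only [smul_eq_mul]
  have : (∑ j : Fin 4, eval (coords x) (pderiv j (pderiv i (Q c))) * coords a j)
      = ∑ j : Fin 4, coords a j * eval (coords x) (pderiv j (pderiv i (Q c))) :=
    Finset.sum_congr rfl fun j _ => mul_comm _ _
  rw [this]

lemma SD_diag (Q : QP) (x : ℍ[ℝ]) (m : Fin 4) :
    SD Q x (uq m) (uq m)
      = ∑ c : Fin 4, eval (coords x) (pderiv m (pderiv m (Q c))) • uq c := by
  rw [SD_apply]
  refine Finset.sum_congr rfl fun c _ => ?_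
  congr 1
  rw [Finset.sum_eq_single m]
  · rw [Finset.sum_eq_single m]
    · simp [coords_uq]
    · intro b _ hb
      rw [coords_uq, if_neg (Ne.symm hb), zero_mul]
    · intro h; exact absurd (Finset.mem_univ m) h
  · intro b _ hb
    simp only [coords_uq]
    simp only [mul_ite, mul_one, mul_zero, ite_mul, one_mul, zero_mul]
    rw [if_neg (Ne.symm hb)]
  · intro h; exact absurd (Finset.mem_univ m) h
set_option maxHeartbeats 2000000

theorem quadratic_relation (k : ℕ) (σ : ℍ[ℝ] → ℍ[ℝ]) (hσ : memVk k σ) :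
    Dbar (Dbar σ) - (2 : ℝ) • Dbar σ - ((k * (k + 2) : ℝ)) • σ = 0 := by
  choose P hhom hharm hrep using hσ
  -- σ is a quaternionic polynomial function
  have hqp : σ = qpoly P := by
    funext x
    show σ x = ∑ c : Fin 4, eval (coords x) (P c) • uq c
    rw [uq_decomp (σ x)]
    exact Finset.sum_congr rfl fun c _ => by rw [hrep c x]
  have hD : ∀ y, HasFDerivAt σ (FD P y) y := fun y => by
    rw [hqp]; exact hasFDerivAt_qpoly P y
  have hfd : ∀ y, fderiv ℝ σ y = FD P y := fun y => (hD y).fderiv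
  -- Euler's identity
  have hE : ∀ y : ℍ[ℝ], FD P y y = (k : ℝ) • σ y := by
    intro y
    rw [FD_apply, hqp]
    show _ = (k:ℝ) • ∑ c : Fin 4, eval (coords y) (P c) • uq c
    rw [Finset.smul_sum]
    refine Finset.sum_congr rfl fun c _ => ?_
    rw [smul_smul]
    congr 1
    have h := congrArg (eval (coords y)) (euler_identity (hhom c))
    rw [map_sum] at h
    simp only [eval_mul, eval_X, smul_eval] at h
    exact h
  have hDb : ∀ y, Dbar σ y
      = -(FD P y (y*e1) * e1 + FD P y (y*e2) * e2 + FD P y (y*e3) * e3) := by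
    intro y
    show -(fderiv ℝ σ y (y*e1) * e1 + fderiv ℝ σ y (y*e2) * e2 + fderiv ℝ σ y (y*e3) * e3) = _
    rw [hfd y]
  -- pointwise
  funext x
  have hSD : HasFDerivAt (fun y => FD P y) (SD P x) x := hasFDerivAt_FD P x
  have hsymm : ∀ a b : ℍ[ℝ], SD P x a b = SD P x b a :=
    fun a b => second_derivative_symmetric hD hSD a b
  -- second Euler identity
  have hBxA : ∀ h : ℍ[ℝ], FD P x h + SD P x h x = (k:ℝ) • FD P x h := by
    intro h
    have h1 : HasFDerivAt (fun y => FD P y y)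
        ((FD P x).comp (ContinuousLinearMap.id ℝ ℍ[ℝ]) + (SD P x).flip x) x :=
      hSD.clm_apply (hasFDerivAt_id x)
    have h2 : HasFDerivAt (fun y => (k:ℝ) • σ y) ((k:ℝ) • FD P x) x :=
      (hD x).const_smul (k:ℝ)
    have h3 : (fun y => FD P y y) = fun y => (k:ℝ) • σ y := funext hE
    have h2' : HasFDerivAt (fun y => FD P y y) ((k:ℝ) • FD P x) x := by
      rw [h3]; exact h2
    have h4 := h1.unique h2'
    have h5 := DFunLike.congr_fun h4 h
    simpa only [ContinuousLinearMap.add_apply, ContinuousLinearMap.comp_apply,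
      ContinuousLinearMap.coe_id', id_eq, ContinuousLinearMap.flip_apply,
      ContinuousLinearMap.smul_apply] using h5
  have hAx : FD P x x = (k:ℝ) • σ x := hE x
  have hSxx : SD P x x x = ((k:ℝ) * (k:ℝ)) • σ x - (k:ℝ) • σ x := by
    have h6 : SD P x x x = (k:ℝ) • FD P x x - FD P x x := by
      have h := hBxA x
      rw [add_comm] at h
      exact eq_sub_of_add_eq h
    rw [h6, hAx, smul_smul]
  -- harmonicity
  have hharm0 : ∑ m : Fin 4, SD P x (uq m) (uq m) = 0 := by
    rw [Finset.sum_congr rfl fun m _ => SD_diag P x m, Finset.sum_comm]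
    refine Finset.sum_eq_zero fun c _ => ?_
    rw [← Finset.sum_smul]
    have h7 : (∑ m : Fin 4, eval (coords x) (pderiv m (pderiv m (P c)))) = 0 := by
      rw [← map_sum, hharm c, map_zero]
    rw [h7, zero_smul]
  -- bilinear expansion
  have hexp : ∀ a b : ℍ[ℝ], SD P x a b
      = ∑ m : Fin 4, ∑ n : Fin 4, (coords a m * coords b n) • SD P x (uq m) (uq n) := by
    intro a b
    conv_lhs => rw [uq_decomp a, uq_decomp b]
    simp only [map_sum, map_smul, ContinuousLinearMap.sum_apply,
      ContinuousLinearMap.smul_apply, Finset.smul_sum, smul_smul]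
    rw [Finset.sum_comm]
    exact Finset.sum_congr rfl fun m _ => Finset.sum_congr rfl fun n _ => by rw [mul_comm]
  -- the key orthogonality relation
  have hV : SD P x (x*e1) (x*e1) + SD P x (x*e2) (x*e2) + SD P x (x*e3) (x*e3)
      + SD P x x x = 0 := by
    have h0 : x * uq 0 = x := by simp [uq]
    have hu1 : uq 1 = e1 := rfl
    have hu2 : uq 2 = e2 := rfl
    have hu3 : uq 3 = e3 := rfl
    have key : ∑ i : Fin 4, SD P x (x * uq i) (x * uq i) = 0 := by
      calc ∑ i : Fin 4, SD P x (x * uq i) (x * uq i)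
          = ∑ i : Fin 4, ∑ m : Fin 4, ∑ n : Fin 4,
              (coords (x * uq i) m * coords (x * uq i) n) • SD P x (uq m) (uq n) :=
            Finset.sum_congr rfl fun i _ => hexp _ _
        _ = ∑ m : Fin 4, ∑ n : Fin 4, ∑ i : Fin 4,
              (coords (x * uq i) m * coords (x * uq i) n) • SD P x (uq m) (uq n) := by
            rw [Finset.sum_comm]
            exact Finset.sum_congr rfl fun m _ => Finset.sum_comm
        _ = ∑ m : Fin 4, ∑ n : Fin 4,
              (if m = n then ∑ j : Fin 4, coords x j ^ 2 else 0) • SD P x (uq m) (uq n) := by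
            refine Finset.sum_congr rfl fun m _ => Finset.sum_congr rfl fun n _ => ?_
            rw [← Finset.sum_smul, coords_orth]
        _ = ∑ m : Fin 4, (∑ j : Fin 4, coords x j ^ 2) • SD P x (uq m) (uq m) := by
            refine Finset.sum_congr rfl fun m _ => ?_
            rw [Finset.sum_eq_single m]
            · simp
            · intro n _ hn
              rw [if_neg (fun h => hn h.symm), zero_smul]
            · intro h; exact absurd (Finset.mem_univ m) h
        _ = (∑ j : Fin 4, coords x j ^ 2) • ∑ m : Fin 4, SD P x (uq m) (uq m) :=
            (Finset.smul_sum).symm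
        _ = 0 := by rw [hharm0, smul_zero]
    rw [Fin.sum_univ_four, h0, hu1, hu2, hu3] at key
    rw [← key]; abel
  have hS11 : SD P x (x*e1) (x*e1)
      = -(SD P x (x*e2) (x*e2)) - SD P x (x*e3) (x*e3) - SD P x x x := by
    have h8 : SD P x (x*e1) (x*e1) + (SD P x (x*e2) (x*e2) + SD P x (x*e3) (x*e3)
        + SD P x x x) = 0 := by rw [← hV]; abel
    have h9 := eq_neg_of_add_eq_zero_left h8
    rw [h9]; abel
  -- derivative of Dbar σ
  have hmulv : ∀ v : ℍ[ℝ], HasFDerivAt (fun y : ℍ[ℝ] => y * v)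
      (mulE v) x := fun v => by
    exact (mulE v).hasFDerivAt
  have hDbarfun : Dbar σ = fun y =>
      -(FD P y (y*e1) * e1 + FD P y (y*e2) * e2 + FD P y (y*e3) * e3) := funext hDb
  have hterm : ∀ v : ℍ[ℝ], HasFDerivAt (fun y => FD P y (y * v) * v)
      ((((FD P x).comp (mulE v)
        + (SD P x).flip (x*v)).smulRight v)) x :=
    fun v => (hSD.clm_apply (hmulv v)).mul_const' v
  have hDbD : HasFDerivAt (Dbar σ)
      (-((((FD P x).comp (mulE e1)
          + (SD P x).flip (x*e1)).smulRight e1)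
        + (((FD P x).comp (mulE e2)
          + (SD P x).flip (x*e2)).smulRight e2)
        + (((FD P x).comp (mulE e3)
          + (SD P x).flip (x*e3)).smulRight e3))) x := by
    rw [hDbarfun]
    exact (((hterm e1).add (hterm e2)).add (hterm e3)).neg
  have hDDexp : Dbar (Dbar σ) x
      = ((FD P x (x*e1*e1) + SD P x (x*e1) (x*e1)) * e1
          + (FD P x (x*e1*e2) + SD P x (x*e1) (x*e2)) * e2
          + (FD P x (x*e1*e3) + SD P x (x*e1) (x*e3)) * e3) * e1
        + ((FD P x (x*e2*e1) + SD P x (x*e2) (x*e1)) * e1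
          + (FD P x (x*e2*e2) + SD P x (x*e2) (x*e2)) * e2
          + (FD P x (x*e2*e3) + SD P x (x*e2) (x*e3)) * e3) * e2
        + ((FD P x (x*e3*e1) + SD P x (x*e3) (x*e1)) * e1
          + (FD P x (x*e3*e2) + SD P x (x*e3) (x*e2)) * e2
          + (FD P x (x*e3*e3) + SD P x (x*e3) (x*e3)) * e3) * e3 := by
    have h10 : Dbar (Dbar σ) x = -(fderiv ℝ (Dbar σ) x (x*e1) * e1
        + fderiv ℝ (Dbar σ) x (x*e2) * e2 + fderiv ℝ (Dbar σ) x (x*e3) * e3) := rfl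
    rw [h10, hDbD.fderiv]
    simp only [ContinuousLinearMap.neg_apply, ContinuousLinearMap.add_apply,
      ContinuousLinearMap.smulRight_apply, ContinuousLinearMap.comp_apply,
      ContinuousLinearMap.flip_apply, mulE_apply,
      smul_eq_mul, neg_mul, neg_neg, neg_add_rev]
    simp only [neg_smul, one_smul, neg_neg, add_mul, neg_mul]
    abel
  -- assemble
  show Dbar (Dbar σ) x - (2:ℝ) • Dbar σ x - ((k * (k + 2) : ℝ)) • σ x = 0
  rw [hDDexp, hDb x]
  rw [mul_assoc x e1 e1, mul_assoc x e1 e2, mul_assoc x e1 e3,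
    mul_assoc x e2 e1, mul_assoc x e2 e2, mul_assoc x e2 e3,
    mul_assoc x e3 e1, mul_assoc x e3 e2, mul_assoc x e3 e3,
    e1_mul_e1, e1_mul_e2, e1_mul_e3, e2_mul_e1, e2_mul_e2, e2_mul_e3,
    e3_mul_e1, e3_mul_e2, e3_mul_e3]
  simp only [mul_neg_one, mul_neg, map_neg, mul_one, neg_neg]
  rw [hsymm (x*e2) (x*e1), hsymm (x*e3) (x*e1), hsymm (x*e3) (x*e2)]
  rw [hS11, hSxx, hAx]
  simp only [add_mul, sub_mul, neg_mul, smul_mul_assoc, mul_assoc,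
    e1_mul_e1, e1_mul_e2, e1_mul_e3, e2_mul_e1, e2_mul_e2, e2_mul_e3,
    e3_mul_e1, e3_mul_e2, e3_mul_e3, mul_neg_one, mul_neg, mul_one, map_neg]
  module
end
end

section
/- Existence of zone functions: let V be a nonzero finite-dimensional real subspace of the continuous functions S³ → ℍ such that (a) for every σ ∈ V and q ∈ ℍ the pointwise right product σ·q lies in V, and (b) for all s, t ∈ S³ and every σ ∈ V the function x ↦ σ(t⁻¹·x·s) lies in V. Then there exists σ ∈ V with σ(1) ≠ 0 and σ(s⁻¹·x·s) = σ(x) for all s ∈ S³ and all x ∈ S³. -/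
open Quaternion Metric

noncomputable section

/-- The group `S³` of unit quaternions. -/
abbrev S3 : Type := Metric.sphere (0 : ℍ[ℝ]) 1

private lemma S3_conj_one (s : S3) : s⁻¹ * 1 * s = 1 := by
  rw [mul_one, inv_mul_cancel]

private lemma S3_conj_conj (u s x : S3) :
    s⁻¹ * (u⁻¹ * x * u) * s = (u * s)⁻¹ * x * (u * s) := by
  rw [mul_inv_rev]; simp [mul_assoc]

set_option maxHeartbeats 1000000 in
/-- Existence of zone functions: a nonzero finite-dimensional real subspace `V` of the
continuous functions `S³ → ℍ` which is stable under pointwise right quaternionic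
multiplication and under two-sided translations contains a function `σ` with `σ(1) ≠ 0`
which is invariant under conjugation. -/
theorem exists_zone_function (V : Submodule ℝ (S3 → ℍ[ℝ]))
    (hV0 : V ≠ ⊥) (hfin : FiniteDimensional ℝ V)
    (hcont : ∀ σ ∈ V, Continuous σ)
    (hq : ∀ σ ∈ V, ∀ q : ℍ[ℝ], (fun x => σ x * q) ∈ V)
    (htrans : ∀ s t : S3, ∀ σ ∈ V, (fun x => σ (t⁻¹ * x * s)) ∈ V) :
    ∃ σ ∈ V, σ 1 ≠ 0 ∧ ∀ (s : S3) (x : S3), σ (s⁻¹ * x * s) = σ x := by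
  classical
  haveI := hfin
  -- Step 1: find σ ∈ V with σ 1 ≠ 0
  obtain ⟨σ₀, hσ₀V, hσ₀⟩ : ∃ σ₀, σ₀ ∈ V ∧ σ₀ ≠ 0 := by
    rcases Submodule.exists_mem_ne_zero_of_ne_bot hV0 with ⟨σ₀, h1, h2⟩
    exact ⟨σ₀, h1, h2⟩
  obtain ⟨x₀, hx₀⟩ : ∃ x₀, σ₀ x₀ ≠ 0 := by
    by_contra h
    push_neg at h
    exact hσ₀ (funext fun x => h x)
  set σ : S3 → ℍ[ℝ] := fun y => σ₀ (x₀⁻¹⁻¹ * y * 1) with hσdef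
  have hσV : σ ∈ V := htrans 1 x₀⁻¹ σ₀ hσ₀V
  have hσ1 : σ 1 ≠ 0 := by
    simpa [hσdef, inv_inv, mul_one] using hx₀
  have hσc : Continuous σ := hcont σ hσV
  -- measure-theoretic setup
  borelize S3
  let μ : MeasureTheory.Measure S3 := MeasureTheory.Measure.haar
  -- Step 2: the family of conjugates, as a map into V
  let Φ : S3 → V := fun s => ⟨fun x => σ (s⁻¹ * x * s), htrans s s σ hσV⟩
  have hΦc : Continuous Φ := by
    apply Continuous.subtype_mk
    apply continuous_pi
    intro x
    exact hσc.comp ((continuous_inv.mul continuous_const).mul continuous_id)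
  -- V is a finite-dimensional Hausdorff TVS; identify it with ℝⁿ
  let n := Module.finrank ℝ V
  let b : Module.Basis (Fin n) ℝ V := Module.finBasis ℝ V
  let e : V ≃L[ℝ] (Fin n → ℝ) := b.equivFun.toContinuousLinearEquiv
  let g : S3 → (Fin n → ℝ) := fun s => e (Φ s)
  have hgc : Continuous g := e.continuous.comp hΦc
  have hgi : MeasureTheory.Integrable g μ :=
    hgc.integrable_of_hasCompactSupport (HasCompactSupport.of_compactSpace g)
  -- the averaged element of V
  let w : V := e.symm (∫ s, g s ∂μ)
  -- evaluation maps, as continuous linear maps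
  have hev : ∀ x : S3, ∃ L : (Fin n → ℝ) →L[ℝ] ℍ[ℝ],
      ∀ v : Fin n → ℝ, L v = (e.symm v : S3 → ℍ[ℝ]) x := by
    intro x
    refine ⟨{ toFun := fun v => (e.symm v : S3 → ℍ[ℝ]) x,
              map_add' := ?_, map_smul' := ?_,
              cont := ?_ }, fun v => rfl⟩
    · intro u v; simp
    · intro c v; simp
    · exact (continuous_apply x).comp (continuous_subtype_val.comp e.symm.continuous)
  have hw : ∀ x : S3, (w : S3 → ℍ[ℝ]) x = ∫ s, σ (s⁻¹ * x * s) ∂μ := by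
    intro x
    obtain ⟨L, hL⟩ := hev x
    have := (L.integral_comp_comm hgi).symm
    calc (w : S3 → ℍ[ℝ]) x = L (∫ s, g s ∂μ) := (hL _).symm
      _ = ∫ s, L (g s) ∂μ := (L.integral_comp_comm hgi).symm
      _ = ∫ s, σ (s⁻¹ * x * s) ∂μ := by
          congr 1; funext s
          rw [hL]
          simp only [g, Φ, ContinuousLinearEquiv.symm_apply_apply]
  refine ⟨(w : S3 → ℍ[ℝ]), w.2, ?_, ?_⟩
  · rw [hw 1]
    have h1 : ∀ s : S3, σ (s⁻¹ * 1 * s) = σ 1 := fun s => congrArg σ (S3_conj_one s)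
    simp only [h1]
    rw [MeasureTheory.integral_const]
    have hμpos : 0 < (μ Set.univ).toReal := by
      refine ENNReal.toReal_pos ?_ ?_
      · exact (isOpen_univ.measure_pos μ ⟨1, trivial⟩).ne'
      · exact (MeasureTheory.measure_ne_top μ _)
    exact smul_ne_zero hμpos.ne' hσ1
  · intro u x
    rw [hw, hw]
    have key : ∀ s : S3, σ (s⁻¹ * (u⁻¹ * x * u) * s) = σ ((u * s)⁻¹ * x * (u * s)) :=
      fun s => congrArg σ (S3_conj_conj u s x)
    simp only [key]
    exact MeasureTheory.integral_mul_left_eq_self (fun s => σ (s⁻¹ * x * s)) u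

end
end

section
/- Casimir identity: for every natural number k and every σ ∈ V_k, one has −(L₁(L₁σ) + L₂(L₂σ) + L₃(L₃σ)) = k(k+2)·σ. -/
open Quaternion MvPolynomial

noncomputable section

namespace CasimirAux

abbrev R4 := MvPolynomial (Fin 4) ℝ

/-! ### Polynomial part -/

lemma pderiv_pderiv_comm (i j : Fin 4) (P : R4) :
    pderiv i (pderiv j P) = pderiv j (pderiv i P) := by
  induction P using MvPolynomial.induction_on' with
  | add p q hp hq => simp [map_add, hp, hq]
  | monomial s a =>
    rcases eq_or_ne i j with rfl | hij
    · rfl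
    · simp only [pderiv_monomial]
      have h1 : (s - Finsupp.single j 1 : Fin 4 →₀ ℕ) i = s i := by
        rw [Finsupp.tsub_apply, Finsupp.single_eq_of_ne' (Ne.symm hij), Nat.sub_zero]
      have h2 : (s - Finsupp.single i 1 : Fin 4 →₀ ℕ) j = s j := by
        rw [Finsupp.tsub_apply, Finsupp.single_eq_of_ne' hij, Nat.sub_zero]
      have h3 : s - Finsupp.single j 1 - Finsupp.single i 1
          = s - Finsupp.single i 1 - Finsupp.single j 1 := by
        ext m; simp only [Finsupp.tsub_apply]; omega
      rw [h1, h2, h3]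
      congr 1
      ring

lemma euler {k : ℕ} {P : R4} (hP : P.IsHomogeneous k) :
    ∑ j : Fin 4, X j * pderiv j P = (k : ℝ) • P := by
  have key : ∀ s ∈ P.support, ∑ j : Fin 4, X j * pderiv j (monomial s (coeff s P))
      = (k : ℝ) • monomial s (coeff s P) := by
    intro s hs
    have hdeg : (∑ j : Fin 4, (s j : ℝ)) = (k : ℝ) := by
      have h0 : ∑ j ∈ s.support, s j = k := by
        have := hP (mem_support_iff.mp hs)
        rw [Finsupp.weight_apply] at this
        simpa [Finsupp.sum] using this
      have h1 : ∑ j : Fin 4, s j = ∑ j ∈ s.support, s j := by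
        refine (Finset.sum_subset (Finset.subset_univ _) ?_).symm
        intro i _ hi
        exact Finsupp.notMem_support_iff.mp hi
      rw [← Nat.cast_sum, h1, h0]
    have hterm : ∀ j : Fin 4, X j * pderiv j (monomial s (coeff s P))
        = (s j : ℝ) • monomial s (coeff s P) := by
      intro j
      rw [pderiv_monomial]
      rcases Nat.eq_zero_or_pos (s j) with h | h
      · simp [h]
      · have hs' : s - Finsupp.single j 1 + Finsupp.single j 1 = s := by
          ext m
          rcases eq_or_ne m j with rfl | hm
          · simp [Finsupp.tsub_apply]; omega
          · simp [Finsupp.tsub_apply, Finsupp.single_eq_of_ne' (Ne.symm hm)]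
        rw [X, monomial_mul, add_comm, hs', smul_monomial, smul_eq_mul]
        congr 1
        ring
    rw [Finset.sum_congr rfl (fun j _ => hterm j), ← Finset.sum_smul, hdeg]
  calc ∑ j : Fin 4, X j * pderiv j P
      = ∑ j : Fin 4, X j * pderiv j (∑ s ∈ P.support, monomial s (coeff s P)) := by
        rw [P.support_sum_monomial_coeff]
    _ = ∑ s ∈ P.support, ∑ j : Fin 4, X j * pderiv j (monomial s (coeff s P)) := by
        simp_rw [map_sum, Finset.mul_sum]
        rw [Finset.sum_comm]
    _ = ∑ s ∈ P.support, (k : ℝ) • monomial s (coeff s P) :=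
        Finset.sum_congr rfl key
    _ = (k : ℝ) • P := by rw [← Finset.smul_sum, P.support_sum_monomial_coeff]

/-- The polynomial incarnations of `L₁, L₂, L₃`. -/
def D1 (P : R4) : R4 :=
  -(X 1) * pderiv 0 P + X 0 * pderiv 1 P + X 3 * pderiv 2 P - X 2 * pderiv 3 P
def D2 (P : R4) : R4 :=
  -(X 2) * pderiv 0 P - X 3 * pderiv 1 P + X 0 * pderiv 2 P + X 1 * pderiv 3 P
def D3 (P : R4) : R4 :=
  -(X 3) * pderiv 0 P + X 2 * pderiv 1 P - X 1 * pderiv 2 P + X 0 * pderiv 3 P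

lemma key_poly (k : ℕ) (P : R4) (hhom : P.IsHomogeneous k)
    (hH : (∑ i : Fin 4, pderiv i (pderiv i P)) = 0) :
    -(D1 (D1 P) + D2 (D2 P) + D3 (D3 P)) = ((k : ℝ) * ((k : ℝ) + 2)) • P := by
  have hE : ∑ j : Fin 4, X j * pderiv j P = (k : ℝ) • P := euler hhom
  have hE2 : ∑ j : Fin 4, X j * pderiv j (∑ l : Fin 4, X l * pderiv l P)
      = ((k : ℝ) * (k : ℝ)) • P := by
    rw [hE]
    calc ∑ j : Fin 4, X j * pderiv j ((k : ℝ) • P)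
        = (k : ℝ) • ∑ j : Fin 4, X j * pderiv j P := by
          rw [Finset.smul_sum]
          refine Finset.sum_congr rfl fun j _ => ?_
          rw [Derivation.map_smul, mul_smul_comm]
      _ = ((k : ℝ) * (k : ℝ)) • P := by rw [hE, smul_smul]
  simp only [Fin.sum_univ_four] at hE hE2 hH
  simp only [D1, D2, D3, map_add, map_sub, map_neg, map_mul, pderiv_mul, pderiv_X,
    Pi.single_apply, Fin.isValue] at hE2 ⊢
  simp only [Fin.reduceEq, reduceIte, mul_one, mul_zero, add_zero, zero_add, map_ofNat] at hE2 ⊢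
  rw [pderiv_pderiv_comm 1 0 P, pderiv_pderiv_comm 2 0 P, pderiv_pderiv_comm 3 0 P,
    pderiv_pderiv_comm 2 1 P, pderiv_pderiv_comm 3 1 P, pderiv_pderiv_comm 3 2 P] at hE2 ⊢
  simp only [smul_eq_C_mul, map_mul, map_add] at hE hE2 ⊢
  have hC2 : (C (2:ℝ) : R4) = 2 := map_ofNat C 2
  rw [hC2]
  linear_combination (2 : R4) * hE + hE2
    - (X 0 * X 0 + X 1 * X 1 + X 2 * X 2 + X 3 * X 3) * hH

/-! ### Analytic part -/

instance : FiniteDimensional ℝ ℍ[ℝ] :=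
  Module.Finite.equiv (QuaternionAlgebra.linearEquivTuple (-1 : ℝ) 0 (-1)).symm

/-- Coordinate projections as continuous linear maps. -/
def coordCLM (c : Fin 4) : ℍ[ℝ] →L[ℝ] ℝ :=
  LinearMap.toContinuousLinearMap
    ((LinearMap.proj c).comp (QuaternionAlgebra.linearEquivTuple (-1 : ℝ) 0 (-1)).toLinearMap)

lemma coordCLM_apply (c : Fin 4) (x : ℍ[ℝ]) : coordCLM c x = coords x c := rfl

/-- Quaternion from coordinates, as a continuous linear map. -/
def toQuatCLM : (Fin 4 → ℝ) →L[ℝ] ℍ[ℝ] :=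
  LinearMap.toContinuousLinearMap
    (QuaternionAlgebra.linearEquivTuple (-1 : ℝ) 0 (-1)).symm.toLinearMap

lemma coords_toQuatCLM (f : Fin 4 → ℝ) (c : Fin 4) : coords (toQuatCLM f) c = f c := by
  fin_cases c <;> rfl

lemma coords_ext {a b : ℍ[ℝ]} (h : ∀ c, coords a c = coords b c) : a = b :=
  QuaternionAlgebra.ext (h 0) (h 1) (h 2) (h 3)

/-- The derivative of `y ↦ eval (coords y) P` at `x`. -/
def A (P : R4) (x : ℍ[ℝ]) : ℍ[ℝ] →L[ℝ] ℝ :=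
  ∑ j : Fin 4, eval (coords x) (pderiv j P) • coordCLM j

lemma A_apply (P : R4) (x w : ℍ[ℝ]) :
    A P x w = ∑ j : Fin 4, eval (coords x) (pderiv j P) * coords w j := by
  simp [A, coordCLM_apply]

lemma hasFDerivAt_eval (P : R4) (x : ℍ[ℝ]) :
    HasFDerivAt (fun y => eval (coords y) P) (A P x) x := by
  induction P using MvPolynomial.induction_on with
  | C a =>
    have : A (C a : R4) x = 0 := by simp [A, pderiv_C]
    rw [this]
    simp only [eval_C]
    exact hasFDerivAt_const _ _
  | add p q hp hq =>
    have : A (p + q) x = A p x + A q x := by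
      simp [A, map_add, add_smul, Finset.sum_add_distrib]
    rw [this]
    simpa [Pi.add_def] using hp.add hq
  | mul_X p j hp =>
    have hXj : HasFDerivAt (fun y : ℍ[ℝ] => coords y j) (coordCLM j) x := by
      have : (fun y : ℍ[ℝ] => coords y j) = coordCLM j :=
        funext fun y => (coordCLM_apply j y).symm
      rw [this]
      exact (coordCLM j).hasFDerivAt
    have hmul := hp.mul hXj
    have hA : A (p * X j) x = eval (coords x) p • coordCLM j + coords x j • A p x := by
      unfold A
      rw [Finset.smul_sum]
      have hsingle : eval (coords x) p • coordCLM j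
          = ∑ i : Fin 4, (if j = i then eval (coords x) p else 0) • coordCLM i := by
        rw [Finset.sum_congr rfl (fun i _ => ite_smul _ _ _ _)]
        simp
      rw [hsingle, ← Finset.sum_add_distrib]
      refine Finset.sum_congr rfl fun i _ => ?_
      rcases eq_or_ne j i with rfl | hij
      · simp only [pderiv_mul, pderiv_X_self, mul_one, map_add, map_mul, eval_X, if_pos rfl]
        rw [add_smul, smul_smul, mul_comm (coords x j), add_comm]
        simp
      · simp only [pderiv_mul, pderiv_X_of_ne hij, mul_zero, add_zero, map_mul, eval_X,
          if_neg hij]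
        rw [smul_smul, mul_comm, zero_smul, zero_add]
    rw [hA]
    have : (fun y => eval (coords y) (p * X j))
        = fun y => eval (coords y) p * coords y j := by
      funext y; simp [eval_mul]
    rw [this]
    exact hmul

/-- `σ` has polynomial components `P`. -/
def Rep (σ : ℍ[ℝ] → ℍ[ℝ]) (P : Fin 4 → R4) : Prop :=
  ∀ x c, coords (σ x) c = eval (coords x) (P c)

lemma hasFDerivAt_rep {σ : ℍ[ℝ] → ℍ[ℝ]} {P : Fin 4 → R4} (h : Rep σ P) (x : ℍ[ℝ]) :
    HasFDerivAt σ (toQuatCLM.comp (ContinuousLinearMap.pi fun c => A (P c) x)) x := by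
  have h1 : σ = fun y => toQuatCLM fun c => eval (coords y) (P c) := by
    funext y
    refine coords_ext fun c => ?_
    rw [coords_toQuatCLM, h y c]
  rw [h1]
  exact toQuatCLM.hasFDerivAt.comp x (hasFDerivAt_pi.mpr fun c => hasFDerivAt_eval (P c) x)

lemma Lop_coords {σ : ℍ[ℝ] → ℍ[ℝ]} {P : Fin 4 → R4} (h : Rep σ P) (v x : ℍ[ℝ]) (c : Fin 4) :
    coords (Lop v σ x) c
      = ∑ j : Fin 4, eval (coords x) (pderiv j (P c)) * coords (x * v) j := by
  unfold Lop
  rw [(hasFDerivAt_rep h x).fderiv, ContinuousLinearMap.comp_apply, coords_toQuatCLM,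
    ContinuousLinearMap.pi_apply, A_apply]

@[simp] lemma e1_re : e1.re = 0 := rfl
@[simp] lemma e1_imI : e1.imI = 1 := rfl
@[simp] lemma e1_imJ : e1.imJ = 0 := rfl
@[simp] lemma e1_imK : e1.imK = 0 := rfl
@[simp] lemma e2_re : e2.re = 0 := rfl
@[simp] lemma e2_imI : e2.imI = 0 := rfl
@[simp] lemma e2_imJ : e2.imJ = 1 := rfl
@[simp] lemma e2_imK : e2.imK = 0 := rfl
@[simp] lemma e3_re : e3.re = 0 := rfl
@[simp] lemma e3_imI : e3.imI = 0 := rfl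
@[simp] lemma e3_imJ : e3.imJ = 0 := rfl
@[simp] lemma e3_imK : e3.imK = 1 := rfl

lemma rep_L1 {σ : ℍ[ℝ] → ℍ[ℝ]} {P : Fin 4 → R4} (h : Rep σ P) :
    Rep (Lop e1 σ) (fun c => D1 (P c)) := by
  intro x c
  rw [Lop_coords h e1 x c]
  simp only [Fin.sum_univ_four, D1, map_add, map_sub, map_mul, map_neg, eval_X, coords,
    Quaternion.re_mul, Quaternion.imI_mul, Quaternion.imJ_mul, Quaternion.imK_mul,
    e1_re, e1_imI, e1_imJ, e1_imK, Matrix.cons_val_zero, Matrix.cons_val_one, Matrix.head_cons,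
    Matrix.cons_val_two, Matrix.tail_cons, Matrix.cons_val_three]
  ring

lemma rep_L2 {σ : ℍ[ℝ] → ℍ[ℝ]} {P : Fin 4 → R4} (h : Rep σ P) :
    Rep (Lop e2 σ) (fun c => D2 (P c)) := by
  intro x c
  rw [Lop_coords h e2 x c]
  simp only [Fin.sum_univ_four, D2, map_add, map_sub, map_mul, map_neg, eval_X, coords,
    Quaternion.re_mul, Quaternion.imI_mul, Quaternion.imJ_mul, Quaternion.imK_mul,
    e2_re, e2_imI, e2_imJ, e2_imK, Matrix.cons_val_zero, Matrix.cons_val_one, Matrix.head_cons,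
    Matrix.cons_val_two, Matrix.tail_cons, Matrix.cons_val_three]
  ring

lemma rep_L3 {σ : ℍ[ℝ] → ℍ[ℝ]} {P : Fin 4 → R4} (h : Rep σ P) :
    Rep (Lop e3 σ) (fun c => D3 (P c)) := by
  intro x c
  rw [Lop_coords h e3 x c]
  simp only [Fin.sum_univ_four, D3, map_add, map_sub, map_mul, map_neg, eval_X, coords,
    Quaternion.re_mul, Quaternion.imI_mul, Quaternion.imJ_mul, Quaternion.imK_mul,
    e3_re, e3_imI, e3_imJ, e3_imK, Matrix.cons_val_zero, Matrix.cons_val_one, Matrix.head_cons,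
    Matrix.cons_val_two, Matrix.tail_cons, Matrix.cons_val_three]
  ring

@[simp] lemma coords_add (a b : ℍ[ℝ]) (c : Fin 4) :
    coords (a + b) c = coords a c + coords b c := by
  fin_cases c <;> simp [coords]

@[simp] lemma coords_neg (a : ℍ[ℝ]) (c : Fin 4) : coords (-a) c = -coords a c := by
  fin_cases c <;> simp [coords]

@[simp] lemma coords_smul (r : ℝ) (a : ℍ[ℝ]) (c : Fin 4) :
    coords (r • a) c = r * coords a c := by
  fin_cases c <;> simp [coords]

end CasimirAux

open CasimirAux

theorem casimir_identity (k : ℕ) (σ : ℍ[ℝ] → ℍ[ℝ]) (hσ : memVk k σ) :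
    -(Lop e1 (Lop e1 σ) + Lop e2 (Lop e2 σ) + Lop e3 (Lop e3 σ))
      = ((k * (k + 2) : ℝ)) • σ := by
  choose P hhom hharm heq using hσ
  have hrep : Rep σ P := fun x c => (heq c x).symm
  have h1 := rep_L1 (rep_L1 hrep)
  have h2 := rep_L2 (rep_L2 hrep)
  have h3 := rep_L3 (rep_L3 hrep)
  funext x
  refine coords_ext fun c => ?_
  have lhs_eq : coords ((-(Lop e1 (Lop e1 σ) + Lop e2 (Lop e2 σ) + Lop e3 (Lop e3 σ))) x) c
      = eval (coords x) (-(D1 (D1 (P c)) + D2 (D2 (P c)) + D3 (D3 (P c)))) := by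
    simp only [Pi.neg_apply, Pi.add_apply, coords_neg, coords_add, h1 x c, h2 x c, h3 x c,
      map_neg, map_add]
  rw [lhs_eq, key_poly k (P c) (hhom c) (hharm c), smul_eval, ← hrep x c]
  simp [coords_smul, Pi.smul_apply]
end
end

section
/- For every natural number k, the function σ_k : ℍ → ℍ defined by σ_k(x) = (x₂ + x₃·e₁)^k (the k-th power, computed in ℍ, of the quaternion x₂ + x₃·e₁) belongs to V_k and satisfies D̄σ_k = −k·σ_k. -/
open Quaternion MvPolynomial

noncomputable section

/-- `σ_k(x) = (x₂ + x₃·e₁)^k`, computed in `ℍ`. -/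
def sigmaPow (k : ℕ) : ℍ[ℝ] → ℍ[ℝ] :=
  fun x => ((⟨x.imJ, x.imK, 0, 0⟩ : ℍ[ℝ]))^k

/-! ### Auxiliary machinery: the embedding of `ℂ` into `ℍ` spanned by `1, e₁`. -/

/-- Embedding of `ℂ` into the subalgebra of `ℍ` spanned by `1` and `e₁`. -/
def cQ : ℂ → ℍ[ℝ] := fun z => ⟨z.re, z.im, 0, 0⟩

/-- The "complex coordinate" `x₂ + x₃ i` of a quaternion. -/
def psi : ℍ[ℝ] → ℂ := fun x => ⟨x.imJ, x.imK⟩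

@[simp] lemma cQ_re (z : ℂ) : (cQ z).re = z.re := rfl
@[simp] lemma cQ_imI (z : ℂ) : (cQ z).imI = z.im := rfl
@[simp] lemma cQ_imJ (z : ℂ) : (cQ z).imJ = 0 := rfl
@[simp] lemma cQ_imK (z : ℂ) : (cQ z).imK = 0 := rfl
lemma e1_parts : e1.re = 0 ∧ e1.imI = 1 ∧ e1.imJ = 0 ∧ e1.imK = 0 := ⟨rfl, rfl, rfl, rfl⟩
lemma e2_parts : e2.re = 0 ∧ e2.imI = 0 ∧ e2.imJ = 1 ∧ e2.imK = 0 := ⟨rfl, rfl, rfl, rfl⟩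
lemma e3_parts : e3.re = 0 ∧ e3.imI = 0 ∧ e3.imJ = 0 ∧ e3.imK = 1 := ⟨rfl, rfl, rfl, rfl⟩

lemma cQ_mul (z w : ℂ) : cQ (z * w) = cQ z * cQ w := by
  ext <;> simp [Complex.mul_re, Complex.mul_im]

lemma cQ_one : cQ 1 = 1 := by ext <;> simp [cQ]

lemma cQ_pow (z : ℂ) (k : ℕ) : cQ (z ^ k) = (cQ z) ^ k := by
  induction k with
  | zero => simp [cQ_one]
  | succ n ih => rw [pow_succ, pow_succ, cQ_mul, ih]

lemma sigmaPow_eq (k : ℕ) (x : ℍ[ℝ]) : sigmaPow k x = cQ ((psi x)^k) := by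
  rw [cQ_pow]; rfl

def psiL : ℍ[ℝ] →L[ℝ] ℂ :=
  LinearMap.toContinuousLinearMap
    { toFun := psi
      map_add' := fun a b => by simp [psi, Complex.ext_iff]
      map_smul' := fun r a => by simp [psi, Complex.ext_iff] }

def cQL : ℂ →L[ℝ] ℍ[ℝ] :=
  LinearMap.toContinuousLinearMap
    { toFun := cQ
      map_add' := fun a b => by ext <;> simp
      map_smul' := fun r a => by ext <;> simp }

lemma psiL_apply (x : ℍ[ℝ]) : psiL x = psi x := rfl
lemma cQL_apply (z : ℂ) : cQL z = cQ z := rfl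

lemma hasFDerivAt_sigmaPow (k : ℕ) (x : ℍ[ℝ]) :
    HasFDerivAt (sigmaPow k)
      (cQL.comp (((ContinuousLinearMap.smulRight (1 : ℂ →L[ℂ] ℂ)
        ((k : ℂ) * (psi x)^(k-1))).restrictScalars ℝ).comp psiL)) x := by
  have h1 : HasFDerivAt (fun z : ℂ => z ^ k)
      ((ContinuousLinearMap.smulRight (1 : ℂ →L[ℂ] ℂ)
        ((k : ℂ) * (psi x)^(k-1))).restrictScalars ℝ) (psi x) :=
    (hasDerivAt_pow k (psi x)).hasFDerivAt.restrictScalars ℝ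
  have h2 : HasFDerivAt (fun x : ℍ[ℝ] => (psi x)^k) _ x :=
    h1.comp x psiL.hasFDerivAt
  have h3 := cQL.hasFDerivAt.comp x h2
  have : (fun x => cQL ((psi x)^k)) = sigmaPow k := by
    funext y; rw [sigmaPow_eq]; rfl
  rw [← this]
  exact h3

lemma fderiv_sigmaPow_apply (k : ℕ) (x v : ℍ[ℝ]) :
    fderiv ℝ (sigmaPow k) x v = cQ ((k : ℂ) * (psi x)^(k-1) * psi v) := by
  rw [(hasFDerivAt_sigmaPow k x).fderiv]
  simp only [ContinuousLinearMap.comp_apply, ContinuousLinearMap.coe_restrictScalars',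
    ContinuousLinearMap.smulRight_apply, ContinuousLinearMap.one_apply, psiL_apply, cQL_apply,
    smul_eq_mul]
  ring_nf

lemma psi_xe1 (x : ℍ[ℝ]) : psi (x * e1) * Complex.I = psi x := by
  simp [psi, e1_parts, Complex.ext_iff]

lemma psi_xe3 (x : ℍ[ℝ]) : psi (x * e3) = Complex.I * psi (x * e2) := by
  simp [psi, e1_parts, e2_parts, e3_parts, Complex.ext_iff]

lemma cQ_I : cQ Complex.I = e1 := by ext <;> simp [cQ, e1]

lemma cQ_mul_e1 (z : ℂ) : cQ z * e1 = cQ (z * Complex.I) := by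
  rw [← cQ_I, ← cQ_mul]

lemma key_cancel (z : ℂ) : cQ z * e2 + cQ (Complex.I * z) * e3 = 0 := by
  ext <;> simp [e2_parts, e3_parts]

lemma cQ_nat_mul (k : ℕ) (w : ℂ) : cQ ((k : ℂ) * w) = (k : ℝ) • cQ w := by
  ext <;> simp

lemma Dbar_sigmaPow (k : ℕ) : Dbar (sigmaPow k) = (-(k : ℝ)) • sigmaPow k := by
  funext x
  have hK : ∀ v, Lop v (sigmaPow k) x = cQ ((k : ℂ) * (psi x)^(k-1) * psi (x * v)) :=
    fun v => fderiv_sigmaPow_apply k x (x * v)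
  set K : ℂ := (k : ℂ) * (psi x)^(k-1) with hKdef
  have t1 : Lop e1 (sigmaPow k) x * e1 = cQ (K * psi x) := by
    rw [hK, cQ_mul_e1, mul_assoc, psi_xe1]
  have t23 : Lop e2 (sigmaPow k) x * e2 + Lop e3 (sigmaPow k) x * e3 = 0 := by
    rw [hK, hK, psi_xe3]
    have : K * (Complex.I * psi (x * e2)) = Complex.I * (K * psi (x * e2)) := by ring
    rw [this]
    exact key_cancel _
  have : Dbar (sigmaPow k) x = -(cQ (K * psi x)) := by
    simp only [Dbar]
    rw [add_assoc, t1, t23, add_zero]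
  rw [this]
  cases k with
  | zero =>
    simp only [hKdef, Nat.cast_zero, zero_mul, Nat.cast_ofNat, neg_smul, CharP.cast_eq_zero,
      zero_smul, neg_zero]
    ext <;> simp
  | succ m =>
    have : K * psi x = ((m+1 : ℕ) : ℂ) * (psi x) ^ (m+1) := by
      rw [hKdef, Nat.add_sub_cancel, mul_assoc, ← pow_succ]
    rw [this, cQ_nat_mul, ← sigmaPow_eq]
    exact (neg_smul _ _).symm

/-- Real and imaginary parts of `(X 2 + i X 3)^k` as polynomials. -/
def PP : ℕ → MvPolynomial (Fin 4) ℝ × MvPolynomial (Fin 4) ℝ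
  | 0 => (1, 0)
  | k+1 => (X 2 * (PP k).1 - X 3 * (PP k).2, X 2 * (PP k).2 + X 3 * (PP k).1)

lemma PP_homogeneous (k : ℕ) : (PP k).1.IsHomogeneous k ∧ (PP k).2.IsHomogeneous k := by
  induction k with
  | zero => exact ⟨isHomogeneous_one _ _, isHomogeneous_zero _ _ _⟩
  | succ n ih =>
    have h1 := ((isHomogeneous_X ℝ 2).mul ih.1).sub ((isHomogeneous_X ℝ 3).mul ih.2)
    have h2 := ((isHomogeneous_X ℝ 2).mul ih.2).add ((isHomogeneous_X ℝ 3).mul ih.1)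
    rw [add_comm 1 n] at h1 h2
    exact ⟨h1, h2⟩

lemma PP_eval (k : ℕ) (x : ℍ[ℝ]) :
    eval (coords x) (PP k).1 = ((psi x)^k).re ∧ eval (coords x) (PP k).2 = ((psi x)^k).im := by
  induction k with
  | zero => simp [PP]
  | succ n ih =>
    have h2 : coords x 2 = x.imJ := rfl
    have h3 : coords x 3 = x.imK := rfl
    rw [pow_succ']
    constructor
    · simp [PP, h2, h3, ih.1, ih.2, Complex.mul_re, psi]
    · simp [PP, h2, h3, ih.1, ih.2, Complex.mul_im, psi]

lemma PP_pderiv01 (k : ℕ) (i : Fin 4) (h : i = 0 ∨ i = 1) :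
    pderiv i (PP k).1 = 0 ∧ pderiv i (PP k).2 = 0 := by
  have hX2 : pderiv i (X 2 : MvPolynomial (Fin 4) ℝ) = 0 := by
    rcases h with h | h <;> subst h <;> simp [pderiv_X, Pi.single_apply]
  have hX3 : pderiv i (X 3 : MvPolynomial (Fin 4) ℝ) = 0 := by
    rcases h with h | h <;> subst h <;> simp [pderiv_X, Pi.single_apply]
  induction k with
  | zero => simp [PP]
  | succ n ih =>
    constructor <;>
    · simp only [PP, map_sub, map_add, pderiv_mul, hX2, hX3, ih.1, ih.2]
      ring

lemma PP_CR (k : ℕ) :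
    pderiv 2 (PP k).1 = pderiv 3 (PP k).2 ∧ pderiv 3 (PP k).1 = -(pderiv 2 (PP k).2) ∧
    pderiv 2 (pderiv 2 (PP k).1) + pderiv 3 (pderiv 3 (PP k).1) = 0 ∧
    pderiv 2 (pderiv 2 (PP k).2) + pderiv 3 (pderiv 3 (PP k).2) = 0 := by
  have hX22 : pderiv 2 (X 2 : MvPolynomial (Fin 4) ℝ) = 1 := by simp [pderiv_X]
  have hX33 : pderiv 3 (X 3 : MvPolynomial (Fin 4) ℝ) = 1 := by simp [pderiv_X]
  have hX23 : pderiv 2 (X 3 : MvPolynomial (Fin 4) ℝ) = 0 := by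
    simp [pderiv_X, Pi.single_apply]
  have hX32 : pderiv 3 (X 2 : MvPolynomial (Fin 4) ℝ) = 0 := by
    simp [pderiv_X, Pi.single_apply]
  induction k with
  | zero => simp [PP]
  | succ n ih =>
    obtain ⟨cr1, cr2, L1, L2⟩ := ih
    refine ⟨?_, ?_, ?_, ?_⟩ <;>
      simp only [PP, map_sub, map_add, pderiv_mul, hX22, hX33, hX23, hX32,
        one_mul, zero_mul, mul_zero, add_zero, zero_add, map_neg]
    · linear_combination (X 2 : MvPolynomial (Fin 4) ℝ) * cr1 - X 3 * cr2
    · linear_combination (X 2 : MvPolynomial (Fin 4) ℝ) * cr2 + X 3 * cr1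
    · linear_combination (2 : MvPolynomial (Fin 4) ℝ) * cr1 + X 2 * L1 - X 3 * L2
    · linear_combination (2 : MvPolynomial (Fin 4) ℝ) * cr2 + X 2 * L2 + X 3 * L1

theorem sigmaPow_eigenvector (k : ℕ) :
    memVk k (sigmaPow k) ∧ Dbar (sigmaPow k) = (-(k : ℝ)) • sigmaPow k := by
  refine ⟨?_, Dbar_sigmaPow k⟩
  intro c
  fin_cases c
  · refine ⟨(PP k).1, (PP_homogeneous k).1, ?_, fun x => ?_⟩
    · rw [Fin.sum_univ_four, (PP_pderiv01 k 0 (Or.inl rfl)).1,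
        (PP_pderiv01 k 1 (Or.inr rfl)).1, map_zero, map_zero, zero_add, zero_add]
      exact (PP_CR k).2.2.1
    · rw [(PP_eval k x).1, sigmaPow_eq]; rfl
  · refine ⟨(PP k).2, (PP_homogeneous k).2, ?_, fun x => ?_⟩
    · rw [Fin.sum_univ_four, (PP_pderiv01 k 0 (Or.inl rfl)).2,
        (PP_pderiv01 k 1 (Or.inr rfl)).2, map_zero, map_zero, zero_add, zero_add]
      exact (PP_CR k).2.2.2
    · rw [(PP_eval k x).2, sigmaPow_eq]; rfl
  · exact ⟨0, isHomogeneous_zero _ _ _, by simp, fun x => by rw [sigmaPow_eq]; simp; rfl⟩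
  · exact ⟨0, isHomogeneous_zero _ _ _, by simp, fun x => by rw [sigmaPow_eq]; simp; rfl⟩

end
end

section
/- The operator D̄ preserves V_k: for every natural number k, every σ ∈ V_k, and every i ∈ {1,2,3}, the functions Lᵢσ and D̄σ again belong to V_k. -/
open Quaternion MvPolynomial

noncomputable section

lemma pderiv_comm' (i j : Fin 4) (P : MvPolynomial (Fin 4) ℝ) :
    pderiv i (pderiv j P) = pderiv j (pderiv i P) := by
  rcases eq_or_ne i j with rfl | hij
  · rfl
  · induction P using MvPolynomial.induction_on' with
    | monomial d a =>
      simp only [pderiv_monomial]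
      have h1 : ((d - Finsupp.single j 1 : Fin 4 →₀ ℕ)) i = d i := by
        rw [Finsupp.tsub_apply, Finsupp.single_eq_of_ne' (Ne.symm hij)]; omega
      have h2 : ((d - Finsupp.single i 1 : Fin 4 →₀ ℕ)) j = d j := by
        rw [Finsupp.tsub_apply, Finsupp.single_eq_of_ne' hij]; omega
      have hAB : d - Finsupp.single j 1 - Finsupp.single i 1
          = d - Finsupp.single i 1 - Finsupp.single j 1 := by
        ext t
        simp only [Finsupp.tsub_apply]
        omega
      rw [h1, h2, hAB]
      congr 1
      push_cast
      ring
    | add p q hp hq => simp [hp, hq]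

lemma degree_univ (d : Fin 4 →₀ ℕ) : d.degree = ∑ i : Fin 4, d i :=
  Finset.sum_subset (Finset.subset_univ _)
    (fun i _ hi => Finsupp.notMem_support_iff.1 hi)

lemma isHomogeneous_pderiv {P : MvPolynomial (Fin 4) ℝ} {k : ℕ} (h : P.IsHomogeneous (k + 1))
    (m : Fin 4) : (pderiv m P).IsHomogeneous k := by
  rw [← mem_homogeneousSubmodule]
  have hrw : pderiv m P = ∑ d ∈ P.support, monomial (d - Finsupp.single m 1) (coeff d P * d m) := by
    conv_lhs => rw [P.as_sum]
    rw [map_sum]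
    simp [pderiv_monomial]
  rw [hrw]
  apply Submodule.sum_mem
  intro d hd
  rw [mem_homogeneousSubmodule]
  rcases Nat.eq_zero_or_pos (d m) with h0 | h0
  · norm_num [h0]
    exact isHomogeneous_zero _ _ _
  · apply isHomogeneous_monomial
    have hdeg : d.degree = k + 1 := by
      have := h (mem_support_iff.1 hd)
      exact (DFunLike.congr_fun (Finsupp.degree_eq_weight_one (R := ℕ)) d).trans this
    rw [degree_univ] at hdeg ⊢
    have hs : ∀ i, ((d - Finsupp.single m 1 : Fin 4 →₀ ℕ)) i = d i - Finsupp.single m 1 i := by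
      intro i; rw [Finsupp.tsub_apply]
    simp only [hs]
    have hm1 : Finsupp.single m (1:ℕ) m = 1 := Finsupp.single_eq_same
    have hm2 : ∀ i, i ≠ m → Finsupp.single m (1:ℕ) i = 0 :=
      fun i hi => Finsupp.single_eq_of_ne' (Ne.symm hi)
    rw [Fin.sum_univ_four] at hdeg ⊢
    fin_cases m <;> simp only [hs] at * <;>
      simp (config := { decide := true }) [Finsupp.single_apply] <;>
      (first
        | (have h0' : 0 < d 0 := h0; omega)
        | (have h0' : 0 < d 1 := h0; omega)
        | (have h0' : 0 < d 2 := h0; omega)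
        | (have h0' : 0 < d 3 := h0; omega))
set_option maxHeartbeats 1000000
def lap (P : MvPolynomial (Fin 4) ℝ) : MvPolynomial (Fin 4) ℝ :=
  ∑ i : Fin 4, pderiv i (pderiv i P)

def Qpoly (A : Fin 4 → Fin 4 → ℝ) (P : MvPolynomial (Fin 4) ℝ) : MvPolynomial (Fin 4) ℝ :=
  ∑ m : Fin 4, ∑ n : Fin 4, A m n • (X n * pderiv m P)

lemma lap_sum {s : Finset (Fin 4 × Fin 4)} (f : Fin 4 × Fin 4 → MvPolynomial (Fin 4) ℝ) :
    lap (∑ x ∈ s, f x) = ∑ x ∈ s, lap (f x) := by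
  unfold lap
  simp only [map_sum]
  exact Finset.sum_comm

lemma lap_smul (a : ℝ) (p : MvPolynomial (Fin 4) ℝ) : lap (a • p) = a • lap p := by
  unfold lap
  simp [map_smul, Finset.smul_sum]

lemma pderiv_eq_zero_of_homog0 {P : MvPolynomial (Fin 4) ℝ} (h : P.IsHomogeneous 0)
    (m : Fin 4) : pderiv m P = 0 := by
  apply pderiv_eq_zero_of_notMem_vars
  intro hm
  rw [mem_vars] at hm
  obtain ⟨d, hd, hmd⟩ := hm
  have h0 : P.totalDegree = 0 := (totalDegree_zero_iff_isHomogeneous (Fin 4)).2 h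
  rw [totalDegree_eq_zero_iff] at h0
  exact absurd (h0 d hd m) (Finsupp.mem_support_iff.1 hmd)

lemma Qpoly_isHomogeneous {P : MvPolynomial (Fin 4) ℝ} {k : ℕ} (h : P.IsHomogeneous k)
    (A : Fin 4 → Fin 4 → ℝ) : (Qpoly A P).IsHomogeneous k := by
  rw [← mem_homogeneousSubmodule]
  apply Submodule.sum_mem
  intro m _
  apply Submodule.sum_mem
  intro n _
  apply Submodule.smul_mem
  rw [mem_homogeneousSubmodule]
  cases k with
  | zero => rw [pderiv_eq_zero_of_homog0 h, mul_zero]; exact isHomogeneous_zero _ _ _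
  | succ k' =>
    have := (isHomogeneous_X ℝ n).mul (isHomogeneous_pderiv h m)
    rwa [add_comm] at this

lemma lap_X_mul (n : Fin 4) (R : MvPolynomial (Fin 4) ℝ) :
    lap (X n * R) = 2 • pderiv n R + X n * lap R := by
  unfold lap
  have step : ∀ i : Fin 4, pderiv i (pderiv i (X n * R)) =
      (2 : ℕ) • (Pi.single (M := fun _ => MvPolynomial (Fin 4) ℝ) i 1 n * pderiv i R)
        + X n * pderiv i (pderiv i R) := by
    intro i
    rw [pderiv_mul, pderiv_X]
    rw [map_add, pderiv_mul, pderiv_mul, pderiv_X]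
    have hz : pderiv i (Pi.single (M := fun _ => MvPolynomial (Fin 4) ℝ) i 1 n) = 0 := by
      rcases eq_or_ne n i with rfl | hni
      · simp
      · simp [Pi.single_eq_of_ne hni]
    rw [hz]
    rw [two_smul]
    ring
  rw [Finset.sum_congr rfl (fun i _ => step i)]
  rw [Finset.sum_add_distrib, ← Finset.mul_sum, ← Finset.smul_sum]
  congr 1
  congr 1
  rw [Fin.sum_univ_four]
  fin_cases n <;> simp [Pi.single_apply]

lemma sum_skew_zero {A : Fin 4 → Fin 4 → ℝ} (hA : ∀ m n, A m n = - A n m)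
    (T : Fin 4 → Fin 4 → MvPolynomial (Fin 4) ℝ) (hT : ∀ m n, T m n = T n m) :
    ∑ m : Fin 4, ∑ n : Fin 4, A m n • T m n = 0 := by
  have hneg : ∑ m : Fin 4, ∑ n : Fin 4, A m n • T m n
      = -∑ m : Fin 4, ∑ n : Fin 4, A m n • T m n := by
    calc ∑ m : Fin 4, ∑ n : Fin 4, A m n • T m n
        = ∑ m : Fin 4, ∑ n : Fin 4, -(A n m • T m n) :=
          Finset.sum_congr rfl fun m _ => Finset.sum_congr rfl fun n _ => by
            rw [hA m n, neg_smul]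
      _ = -∑ m : Fin 4, ∑ n : Fin 4, A n m • T m n := by
          simp [Finset.sum_neg_distrib]
      _ = -∑ n : Fin 4, ∑ m : Fin 4, A n m • T m n := by rw [Finset.sum_comm]
      _ = -∑ m : Fin 4, ∑ n : Fin 4, A m n • T m n :=
          neg_inj.mpr (Finset.sum_congr rfl fun a _ => Finset.sum_congr rfl fun b _ => by
            rw [hT b a])
  have h3 : (2 : ℝ) • ∑ m : Fin 4, ∑ n : Fin 4, A m n • T m n = 0 := by
    rw [two_smul]
    nth_rewrite 2 [hneg]
    simp
  have h4 : ∑ m : Fin 4, ∑ n : Fin 4, A m n • T m n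
      = (2⁻¹ : ℝ) • ((2 : ℝ) • ∑ m : Fin 4, ∑ n : Fin 4, A m n • T m n) := by
    rw [smul_smul]
    norm_num
  rw [h4, h3, smul_zero]

lemma lap_Qpoly {P : MvPolynomial (Fin 4) ℝ} (hlap : lap P = 0)
    {A : Fin 4 → Fin 4 → ℝ} (hA : ∀ m n, A m n = - A n m) :
    lap (Qpoly A P) = 0 := by
  have hlapd : ∀ m : Fin 4, lap (pderiv m P) = 0 := by
    intro m
    unfold lap at hlap ⊢
    have hsw : ∑ i : Fin 4, pderiv i (pderiv i (pderiv m P))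
        = pderiv m (∑ i : Fin 4, pderiv i (pderiv i P)) := by
      rw [map_sum]
      exact Finset.sum_congr rfl fun i _ => by rw [pderiv_comm' i m, pderiv_comm' i m]
    rw [hsw, hlap, map_zero]
  have hterm : ∀ m n : Fin 4, lap (X n * pderiv m P) = 2 • pderiv n (pderiv m P) := by
    intro m n
    rw [lap_X_mul, hlapd, mul_zero, add_zero]
  have hlin : lap (Qpoly A P)
      = ∑ m : Fin 4, ∑ n : Fin 4, A m n • ((2 • pderiv n (pderiv m P) : MvPolynomial (Fin 4) ℝ)) := by
    unfold Qpoly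
    rw [← Finset.sum_product']
    rw [lap_sum]
    rw [Finset.sum_product]
    exact Finset.sum_congr rfl fun m _ => Finset.sum_congr rfl fun n _ => by
      rw [lap_smul, hterm]
  rw [hlin]
  exact sum_skew_zero hA (fun m n => (2 • pderiv n (pderiv m P) : MvPolynomial (Fin 4) ℝ))
    (fun m n => by
      show (2 • pderiv n (pderiv m P) : MvPolynomial (Fin 4) ℝ) = 2 • pderiv m (pderiv n P)
      rw [pderiv_comm'])

lemma hasFDerivAt_eval (P : MvPolynomial (Fin 4) ℝ) (y : Fin 4 → ℝ) :
    HasFDerivAt (fun z : Fin 4 → ℝ => eval z P)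
      (∑ m : Fin 4, eval y (pderiv m P) • (ContinuousLinearMap.proj m : (Fin 4 → ℝ) →L[ℝ] ℝ))
      y := by
  induction P using MvPolynomial.induction_on with
  | C a =>
    have h0 : (∑ m : Fin 4, eval y (pderiv m (C a : MvPolynomial (Fin 4) ℝ)) •
        (ContinuousLinearMap.proj m : (Fin 4 → ℝ) →L[ℝ] ℝ)) = 0 := by
      simp [pderiv_C]
    rw [h0]
    exact (hasFDerivAt_const (a : ℝ) y).congr_of_eventuallyEq
      (Filter.Eventually.of_forall fun z => by simp)
  | add p q hp hq =>
    have h0 : (∑ m : Fin 4, eval y (pderiv m (p + q)) •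
          (ContinuousLinearMap.proj m : (Fin 4 → ℝ) →L[ℝ] ℝ))
        = (∑ m : Fin 4, eval y (pderiv m p) • (ContinuousLinearMap.proj m : (Fin 4 → ℝ) →L[ℝ] ℝ))
          + ∑ m : Fin 4, eval y (pderiv m q) •
            (ContinuousLinearMap.proj m : (Fin 4 → ℝ) →L[ℝ] ℝ) := by
      rw [← Finset.sum_add_distrib]
      exact Finset.sum_congr rfl fun m _ => by rw [map_add, map_add, add_smul]
    rw [h0]
    exact (hp.add hq).congr_of_eventuallyEq
      (Filter.Eventually.of_forall fun z => by simp)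
  | mul_X p n hp =>
    have hx : ∀ m : Fin 4, pderiv m (X n : MvPolynomial (Fin 4) ℝ)
        = if n = m then 1 else 0 := by
      intro m
      rw [pderiv_X]
      rcases eq_or_ne n m with rfl | h
      · simp
      · simp [Pi.single_eq_of_ne h, h]
    have h0 : (∑ m : Fin 4, eval y (pderiv m (p * X n)) •
          (ContinuousLinearMap.proj m : (Fin 4 → ℝ) →L[ℝ] ℝ))
        = eval y p • (ContinuousLinearMap.proj n : (Fin 4 → ℝ) →L[ℝ] ℝ)
          + y n • ∑ m : Fin 4, eval y (pderiv m p) •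
            (ContinuousLinearMap.proj m : (Fin 4 → ℝ) →L[ℝ] ℝ) := by
      have step : ∀ m : Fin 4, eval y (pderiv m (p * X n)) •
            (ContinuousLinearMap.proj m : (Fin 4 → ℝ) →L[ℝ] ℝ)
          = (if n = m then eval y p • (ContinuousLinearMap.proj m : (Fin 4 → ℝ) →L[ℝ] ℝ) else 0)
            + y n • (eval y (pderiv m p) •
              (ContinuousLinearMap.proj m : (Fin 4 → ℝ) →L[ℝ] ℝ)) := by
        intro m
        rw [pderiv_mul, hx]
        rcases eq_or_ne n m with rfl | h
        · simp [map_add, eval_mul, eval_X, add_smul, smul_smul, mul_comm, add_comm]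
        · simp [h, map_add, eval_mul, eval_X, add_smul, smul_smul, mul_comm]
      rw [Finset.sum_congr rfl fun m _ => step m, Finset.sum_add_distrib]
      congr 1
      · rw [Finset.sum_ite_eq (Finset.univ : Finset (Fin 4)) n
          (fun m => eval y p • (ContinuousLinearMap.proj m : (Fin 4 → ℝ) →L[ℝ] ℝ))]
        simp
      · rw [Finset.smul_sum]
    rw [h0]
    have h2 : HasFDerivAt (fun z : Fin 4 → ℝ => z n)
        (ContinuousLinearMap.proj n : (Fin 4 → ℝ) →L[ℝ] ℝ) y :=
      (ContinuousLinearMap.proj n : (Fin 4 → ℝ) →L[ℝ] ℝ).hasFDerivAt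
    exact (hp.mul h2).congr_of_eventuallyEq
      (Filter.Eventually.of_forall fun z => by simp [eval_mul])

def E4lin : ℍ[ℝ] ≃ₗ[ℝ] (Fin 4 → ℝ) := QuaternionAlgebra.linearEquivTuple (-1 : ℝ) 0 (-1)

def E4 : ℍ[ℝ] ≃L[ℝ] (Fin 4 → ℝ) := E4lin.toContinuousLinearEquiv

lemma coords_eq_E4 (x : ℍ[ℝ]) : coords x = E4 x := by
  funext c
  fin_cases c <;> rfl

lemma coords_fderiv (P : Fin 4 → MvPolynomial (Fin 4) ℝ) (σ : ℍ[ℝ] → ℍ[ℝ])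
    (hP : ∀ c x, eval (coords x) (P c) = coords (σ x) c) (x w : ℍ[ℝ]) (c : Fin 4) :
    coords (fderiv ℝ σ x w) c
      = ∑ m : Fin 4, eval (coords x) (pderiv m (P c)) * coords w m := by
  set F : ℍ[ℝ] → (Fin 4 → ℝ) := fun z c => eval (coords z) (P c) with hF
  have hσF : σ = fun z => E4.symm (F z) := by
    funext z
    apply E4.injective
    rw [ContinuousLinearEquiv.apply_symm_apply]
    funext d
    show E4 (σ z) d = eval (coords z) (P d)
    rw [hP d z, coords_eq_E4]
  set D : Fin 4 → (ℍ[ℝ] →L[ℝ] ℝ) := fun d =>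
    (∑ m : Fin 4, eval (coords x) (pderiv m (P d)) •
      (ContinuousLinearMap.proj m : (Fin 4 → ℝ) →L[ℝ] ℝ)).comp
      (E4.toContinuousLinearMap) with hD
  have hFd : HasFDerivAt F (ContinuousLinearMap.pi D) x := by
    apply hasFDerivAt_pi.2
    intro d
    have h1 : HasFDerivAt (fun z : ℍ[ℝ] => eval (E4 z) (P d)) (D d) x := by
      rw [hD]
      have h2 := (hasFDerivAt_eval (P d) (E4 x)).comp x
        (E4.toContinuousLinearMap.hasFDerivAt)
      rw [show ((E4 x : Fin 4 → ℝ)) = coords x from (coords_eq_E4 x).symm] at h2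
      exact h2
    exact h1.congr_of_eventuallyEq (Filter.Eventually.of_forall fun z => by
      show eval (coords z) (P d) = eval (E4 z) (P d)
      rw [coords_eq_E4])
  have hσd : HasFDerivAt σ
      ((E4.symm.toContinuousLinearMap).comp (ContinuousLinearMap.pi D)) x := by
    rw [hσF]
    exact (E4.symm.toContinuousLinearMap.hasFDerivAt).comp x hFd
  rw [hσd.fderiv]
  have h3 : ((E4.symm.toContinuousLinearMap).comp (ContinuousLinearMap.pi D)) w
      = E4.symm (ContinuousLinearMap.pi D w) := rfl
  rw [h3, coords_eq_E4, ContinuousLinearEquiv.apply_symm_apply,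
    ContinuousLinearMap.pi_apply, hD]
  show (∑ m : Fin 4, eval (coords x) (pderiv m (P c)) •
      (ContinuousLinearMap.proj m : (Fin 4 → ℝ) →L[ℝ] ℝ)) (E4 w) = _
  rw [ContinuousLinearMap.sum_apply]
  exact Finset.sum_congr rfl fun m _ => by
    rw [show ((E4 w : Fin 4 → ℝ)) = coords w from (coords_eq_E4 w).symm]
    simp [ContinuousLinearMap.proj_apply]

def basisQ : Fin 4 → ℍ[ℝ] := ![1, e1, e2, e3]

@[simp] lemma e1_re : e1.re = 0 := rfl
@[simp] lemma e1_imI : e1.imI = 1 := rfl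
@[simp] lemma e1_imJ : e1.imJ = 0 := rfl
@[simp] lemma e1_imK : e1.imK = 0 := rfl
@[simp] lemma e2_re : e2.re = 0 := rfl
@[simp] lemma e2_imI : e2.imI = 0 := rfl
@[simp] lemma e2_imJ : e2.imJ = 1 := rfl
@[simp] lemma e2_imK : e2.imK = 0 := rfl
@[simp] lemma e3_re : e3.re = 0 := rfl
@[simp] lemma e3_imI : e3.imI = 0 := rfl
@[simp] lemma e3_imJ : e3.imJ = 0 := rfl
@[simp] lemma e3_imK : e3.imK = 1 := rfl

lemma coords_mul_right (x v : ℍ[ℝ]) (m : Fin 4) :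
    coords (x * v) m = ∑ n : Fin 4, coords x n * coords (basisQ n * v) m := by
  rw [Fin.sum_univ_four]
  fin_cases m <;>
    · simp [coords, basisQ]
      ring

lemma lap_add (P Q : MvPolynomial (Fin 4) ℝ) : lap (P + Q) = lap P + lap Q := by
  unfold lap
  simp [map_add, Finset.sum_add_distrib]

lemma lap_neg (P : MvPolynomial (Fin 4) ℝ) : lap (-P) = - lap P := by
  unfold lap
  simp [Finset.sum_neg_distrib]

lemma eval_Qpoly (A : Fin 4 → Fin 4 → ℝ) (P : MvPolynomial (Fin 4) ℝ) (y : Fin 4 → ℝ) :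
    eval y (Qpoly A P) = ∑ m : Fin 4, (∑ n : Fin 4, A m n * y n) * eval y (pderiv m P) := by
  unfold Qpoly
  rw [map_sum]
  refine Finset.sum_congr rfl fun m _ => ?_
  rw [map_sum, Finset.sum_mul]
  refine Finset.sum_congr rfl fun n _ => ?_
  rw [smul_eq_C_mul, eval_mul, eval_mul, eval_C, eval_X]
  ring

lemma memVk_Lop {k : ℕ} {σ : ℍ[ℝ] → ℍ[ℝ]} (hσ : memVk k σ) (v : ℍ[ℝ])
    (hskew : ∀ m n : Fin 4, coords (basisQ n * v) m = - coords (basisQ m * v) n) :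
    memVk k (Lop v σ) := by
  choose P h1 h2 h3 using hσ
  intro c
  refine ⟨Qpoly (fun m n => coords (basisQ n * v) m) (P c), ?_, ?_, ?_⟩
  · exact Qpoly_isHomogeneous (h1 c) _
  · exact lap_Qpoly (h2 c) hskew
  · intro x
    rw [eval_Qpoly]
    rw [show coords (Lop v σ x) c = coords (fderiv ℝ σ x (x * v)) c from rfl,
      coords_fderiv P σ h3 x (x * v) c]
    refine Finset.sum_congr rfl fun m _ => ?_
    rw [coords_mul_right, mul_comm]
    congr 1
    exact Finset.sum_congr rfl fun n _ => mul_comm _ _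

lemma skew_e1 : ∀ m n : Fin 4, coords (basisQ n * e1) m = - coords (basisQ m * e1) n := by
  intro m n
  fin_cases m <;> fin_cases n <;> norm_num [coords, basisQ]

lemma skew_e2 : ∀ m n : Fin 4, coords (basisQ n * e2) m = - coords (basisQ m * e2) n := by
  intro m n
  fin_cases m <;> fin_cases n <;> norm_num [coords, basisQ]

lemma skew_e3 : ∀ m n : Fin 4, coords (basisQ n * e3) m = - coords (basisQ m * e3) n := by
  intro m n
  fin_cases m <;> fin_cases n <;> norm_num [coords, basisQ]

theorem Dbar_preserves_Vk (k : ℕ) (σ : ℍ[ℝ] → ℍ[ℝ]) (hσ : memVk k σ) :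
    (∀ v ∈ ({e1, e2, e3} : Set ℍ[ℝ]), memVk k (Lop v σ)) ∧ memVk k (Dbar σ) := by
  have hL1 : memVk k (Lop e1 σ) := memVk_Lop hσ e1 skew_e1
  have hL2 : memVk k (Lop e2 σ) := memVk_Lop hσ e2 skew_e2
  have hL3 : memVk k (Lop e3 σ) := memVk_Lop hσ e3 skew_e3
  constructor
  · intro v hv
    rcases hv with rfl | rfl | rfl
    · exact hL1
    · exact hL2
    · exact hL3
  · intro c
    fin_cases c
    · obtain ⟨P1, a1, b1, c1⟩ := hL1 1
      obtain ⟨P2, a2, b2, c2⟩ := hL2 2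
      obtain ⟨P3, a3, b3, c3⟩ := hL3 3
      refine ⟨P1 + P2 + P3, (a1.add a2).add a3, ?_, fun x => ?_⟩
      · show lap _ = 0
        rw [lap_add, lap_add]
        rw [show lap P1 = 0 from b1, show lap P2 = 0 from b2, show lap P3 = 0 from b3]
        simp
      · rw [map_add, map_add, c1 x, c2 x, c3 x]
        simp [Dbar, coords]
        ring
    · obtain ⟨P1, a1, b1, c1⟩ := hL1 0
      obtain ⟨P2, a2, b2, c2⟩ := hL2 3
      obtain ⟨P3, a3, b3, c3⟩ := hL3 2
      refine ⟨-P1 + P2 - P3, ((a1.neg).add a2).sub a3, ?_, fun x => ?_⟩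
      · show lap _ = 0
        rw [sub_eq_add_neg, lap_add, lap_add, lap_neg, lap_neg]
        rw [show lap P1 = 0 from b1, show lap P2 = 0 from b2, show lap P3 = 0 from b3]
        simp
      · rw [map_sub, map_add, map_neg, c1 x, c2 x, c3 x]
        simp [Dbar, coords]
        ring
    · obtain ⟨P1, a1, b1, c1⟩ := hL1 3
      obtain ⟨P2, a2, b2, c2⟩ := hL2 0
      obtain ⟨P3, a3, b3, c3⟩ := hL3 1
      refine ⟨-P1 - P2 + P3, ((a1.neg).sub a2).add a3, ?_, fun x => ?_⟩
      · show lap _ = 0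
        rw [sub_eq_add_neg, lap_add, lap_add, lap_neg, lap_neg]
        rw [show lap P1 = 0 from b1, show lap P2 = 0 from b2, show lap P3 = 0 from b3]
        simp
      · rw [map_add, map_sub, map_neg, c1 x, c2 x, c3 x]
        simp [Dbar, coords]
        ring
    · obtain ⟨P1, a1, b1, c1⟩ := hL1 2
      obtain ⟨P2, a2, b2, c2⟩ := hL2 1
      obtain ⟨P3, a3, b3, c3⟩ := hL3 0
      refine ⟨P1 - P2 - P3, (a1.sub a2).sub a3, ?_, fun x => ?_⟩
      · show lap _ = 0
        rw [sub_eq_add_neg, sub_eq_add_neg, lap_add, lap_add, lap_neg, lap_neg]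
        rw [show lap P1 = 0 from b1, show lap P2 = 0 from b2, show lap P3 = 0 from b3]
        simp
      · rw [map_sub, map_sub, c1 x, c2 x, c3 x]
        simp [Dbar, coords]
        ring

end
end

section
/- Lowering-operator diagram: define, for continuously differentiable f : ℍ → ℂ, the operators (Af)(x) = −(1/2)·Df(x)[x·e₂] + (𝕚/2)·Df(x)[x·e₃] and (Bf)(x) = (1/2)·Df(x)[e₂·x] − (𝕚/2)·Df(x)[e₃·x] (quaternion products inside the derivative directions). Then, with g₂ = z₂, ḡ₂ = conj(z₂), g₋₁ = −z₁, ḡ₁ = conj(z₁): A g₂ = g₋₁, B g₂ = ḡ₁, A g₋₁ = 0, B g₋₁ = ḡ₂, A ḡ₁ = ḡ₂, B ḡ₁ = 0, A ḡ₂ = 0, and B ḡ₂ = 0. -/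
open Quaternion

noncomputable section

/-- The complex coordinate `z₁(x) = x₀ + x₁·𝕚`. -/
def z1 (x : ℍ[ℝ]) : ℂ := (x.re : ℂ) + (x.imI : ℂ) * Complex.I

/-- The complex coordinate `z₂(x) = x₂ + x₃·𝕚`. -/
def z2 (x : ℍ[ℝ]) : ℂ := (x.imJ : ℂ) + (x.imK : ℂ) * Complex.I

/-- The lowering operator `A`: `(Af)(x) = −(1/2)·Df(x)[x·e₂] + (𝕚/2)·Df(x)[x·e₃]`. -/
def Aop (f : ℍ[ℝ] → ℂ) : ℍ[ℝ] → ℂ :=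
  fun x => -(1 / 2 : ℂ) * fderiv ℝ f x (x * e2) + (Complex.I / 2) * fderiv ℝ f x (x * e3)

/-- The lowering operator `B`: `(Bf)(x) = (1/2)·Df(x)[e₂·x] − (𝕚/2)·Df(x)[e₃·x]`. -/
def Bop (f : ℍ[ℝ] → ℂ) : ℍ[ℝ] → ℂ :=
  fun x => (1 / 2 : ℂ) * fderiv ℝ f x (e2 * x) - (Complex.I / 2) * fderiv ℝ f x (e3 * x)

/-- `g₂ = z₂`. -/
def g2 : ℍ[ℝ] → ℂ := z2
/-- `ḡ₂ = conj(z₂)`. -/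
def g2bar : ℍ[ℝ] → ℂ := fun x => (starRingEnd ℂ) (z2 x)
/-- `g₋₁ = −z₁`. -/
def gm1 : ℍ[ℝ] → ℂ := fun x => -z1 x
/-- `ḡ₁ = conj(z₁)`. -/
def g1bar : ℍ[ℝ] → ℂ := fun x => (starRingEnd ℂ) (z1 x)

/-- A generic real-linear map `ℍ → ℂ` given by coefficients on the four components. -/
def Lc (a b c d : ℂ) : ℍ[ℝ] →L[ℝ] ℂ :=
  LinearMap.toContinuousLinearMap
  { toFun := fun v => (v.re : ℂ) * a + (v.imI : ℂ) * b + (v.imJ : ℂ) * c + (v.imK : ℂ) * d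
    map_add' := by intro x y; push_cast [Quaternion.re_add, Quaternion.imI_add,
      Quaternion.imJ_add, Quaternion.imK_add]; ring
    map_smul' := by intro r x; push_cast [Quaternion.re_smul, Quaternion.imI_smul,
      Quaternion.imJ_smul, Quaternion.imK_smul, Complex.real_smul, smul_eq_mul, RingHom.id_apply]; ring }

@[simp] lemma Lc_apply (a b c d : ℂ) (v : ℍ[ℝ]) :
    Lc a b c d v = (v.re : ℂ) * a + (v.imI : ℂ) * b + (v.imJ : ℂ) * c + (v.imK : ℂ) * d := rfl

lemma fderiv_Lc (F : ℍ[ℝ] → ℂ) (a b c d : ℂ) (h : F = ⇑(Lc a b c d)) (x : ℍ[ℝ]) :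
    fderiv ℝ F x = Lc a b c d := by
  rw [h]; exact (Lc a b c d).hasFDerivAt.fderiv

lemma hg2 : g2 = ⇑(Lc 0 0 1 Complex.I) := by
  funext v; simp [g2, z2]

lemma hgm1 : gm1 = ⇑(Lc (-1) (-Complex.I) 0 0) := by
  funext v; simp [gm1, z1]; ring

lemma hg1bar : g1bar = ⇑(Lc 1 (-Complex.I) 0 0) := by
  funext v; simp [g1bar, z1, Complex.ext_iff]

lemma hg2bar : g2bar = ⇑(Lc 0 0 1 (-Complex.I)) := by
  funext v; simp [g2bar, z2, Complex.ext_iff]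

/-- The lowering-operator diagram on `g₂`, `g₋₁`, `ḡ₁`, `ḡ₂`. -/
theorem lowering_diagram :
    Aop g2 = gm1 ∧ Bop g2 = g1bar ∧
    Aop gm1 = 0 ∧ Bop gm1 = g2bar ∧
    Aop g1bar = g2bar ∧ Bop g1bar = 0 ∧
    Aop g2bar = 0 ∧ Bop g2bar = 0 := by
  refine ⟨?_, ?_, ?_, ?_, ?_, ?_, ?_, ?_⟩ <;>
  · funext x
    simp only [Aop, Bop, fderiv_Lc g2 _ _ _ _ hg2, fderiv_Lc gm1 _ _ _ _ hgm1,
      fderiv_Lc g1bar _ _ _ _ hg1bar, fderiv_Lc g2bar _ _ _ _ hg2bar,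
      Lc_apply, Quaternion.re_mul, Quaternion.imI_mul, Quaternion.imJ_mul,
      Quaternion.imK_mul, gm1, g1bar, g2bar, z1, z2, Pi.zero_apply]
    simp only [e2, e3]
    push_cast
    apply Complex.ext <;> simp <;> ring_nf
end
end
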